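/- Let ξ be an extremal number (so that ŵ_2(ξ) = (3+√5)/2 and w_2(ξ) = 2+√5). Then ŵ*_3(ξ) ≤ 3(2+√5)/(1+√5). -/

import Mathlib

open Polynomial Filter

/-- Height of an integer polynomial: the maximum absolute value of its coefficients. -/
noncomputable def polyHeight (P : Polynomial ℤ) : ℝ :=
  ((P.support.sup fun i => (P.coeff i).natAbs : ℕ) : ℝ)

/-- `P` and `Q` have no common non-constant factor in `ℤ[X]`. -/
def CoprimePoly (P Q : Polynomial ℤ) : Prop :=
  ∀ d : Polynomial ℤ, d ∣ P → d ∣ Q → d.natDegree = 0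

/-- The exponent `w_n(ξ)`. -/
noncomputable def wExp (n : ℕ) (ξ : ℝ) : EReal :=
  sSup {x : EReal | ∃ w : ℝ, x = (w : EReal) ∧
    {P : Polynomial ℤ | P.natDegree ≤ n ∧ 0 < |Polynomial.aeval ξ P| ∧
      |Polynomial.aeval ξ P| ≤ (polyHeight P) ^ (-w)}.Infinite}

/-- The uniform exponent `ŵ_n(ξ)`. -/
noncomputable def whExp (n : ℕ) (ξ : ℝ) : EReal :=
  sSup {x : EReal | ∃ w : ℝ, x = (w : EReal) ∧
    ∀ᶠ H : ℝ in atTop, ∃ P : Polynomial ℤ, P.natDegree ≤ n ∧ polyHeight P ≤ H ∧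
      0 < |Polynomial.aeval ξ P| ∧ |Polynomial.aeval ξ P| ≤ H ^ (-w)}

/-- The exponent `w*_n(ξ)` of approximation by algebraic numbers of degree at most `n`;
the height of an algebraic number is the height of its irreducible defining polynomial. -/
noncomputable def wStarExp (n : ℕ) (ξ : ℝ) : EReal :=
  sSup {x : EReal | ∃ w : ℝ, x = (w : EReal) ∧
    {α : ℝ | ∃ P : Polynomial ℤ, Irreducible P ∧ Polynomial.aeval α P = 0 ∧
      P.natDegree ≤ n ∧ 0 < |ξ - α| ∧ |ξ - α| ≤ (polyHeight P) ^ (-w - 1)}.Infinite}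

/-- The uniform exponent `ŵ*_n(ξ)`. -/
noncomputable def whStarExp (n : ℕ) (ξ : ℝ) : EReal :=
  sSup {x : EReal | ∃ w : ℝ, x = (w : EReal) ∧
    ∀ᶠ H : ℝ in atTop, ∃ α : ℝ, ∃ P : Polynomial ℤ, Irreducible P ∧
      Polynomial.aeval α P = 0 ∧ P.natDegree ≤ n ∧ polyHeight P ≤ H ∧
      0 < |ξ - α| ∧ |ξ - α| ≤ (polyHeight P)⁻¹ * H ^ (-w)}


namespace Aux12


lemma polyHeight_nonneg (P : Polynomial ℤ) : 0 ≤ polyHeight P := Nat.cast_nonneg _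

lemma natAbs_coeff_le (P : Polynomial ℤ) (i : ℕ) :
    (P.coeff i).natAbs ≤ P.support.sup fun j => (P.coeff j).natAbs := by
  by_cases h : P.coeff i = 0
  · simp [h]
  · exact Finset.le_sup (f := fun j => (P.coeff j).natAbs) (Polynomial.mem_support_iff.mpr h)

lemma abs_coeff_le_polyHeight (P : Polynomial ℤ) (i : ℕ) :
    |(P.coeff i : ℝ)| ≤ polyHeight P := by
  have := natAbs_coeff_le P i
  have h2 : |(P.coeff i : ℝ)| = ((P.coeff i).natAbs : ℝ) := by
    simp [Nat.cast_natAbs]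
  rw [h2, polyHeight]
  exact_mod_cast this

lemma one_le_polyHeight {P : Polynomial ℤ} (hP : P ≠ 0) : 1 ≤ polyHeight P := by
  obtain ⟨i, hi⟩ : ∃ i, P.coeff i ≠ 0 := by
    by_contra h; push_neg at h; exact hP (Polynomial.ext fun i => h i)
  have h1 : (1 : ℝ) ≤ |(P.coeff i : ℝ)| := by
    rw [← Int.cast_abs]; exact_mod_cast Int.one_le_abs hi
  exact h1.trans (abs_coeff_le_polyHeight P i)

lemma polyHeight_le_of_natAbs_le {P Q : Polynomial ℤ}
    (h : ∀ i, (P.coeff i).natAbs ≤ (Q.coeff i).natAbs ∨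
      ∃ j, (P.coeff i).natAbs ≤ (Q.coeff j).natAbs) :
    polyHeight P ≤ polyHeight Q := by
  rw [polyHeight, polyHeight, Nat.cast_le]
  apply Finset.sup_le
  intro i _
  rcases h i with h'|⟨j, h'⟩
  · exact h'.trans (natAbs_coeff_le Q i)
  · exact h'.trans (natAbs_coeff_le Q j)

lemma aeval_ne_zero_of_transcendental {ξ : ℝ} (hξ : Transcendental ℚ ξ)
    {P : Polynomial ℤ} (hP : P ≠ 0) : Polynomial.aeval ξ P ≠ 0 := by
  intro h
  apply hξ
  refine ⟨P.map (Int.castRingHom ℚ), ?_, ?_⟩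
  · intro hh
    exact hP (Polynomial.map_injective _ Int.cast_injective (by simpa using hh))
  · rw [show Int.castRingHom ℚ = algebraMap ℤ ℚ from rfl, Polynomial.aeval_map_algebraMap]
    exact h

lemma finite_polys (n : ℕ) (B : ℝ) :
    {P : Polynomial ℤ | P.natDegree ≤ n ∧ polyHeight P ≤ B}.Finite := by
  classical
  set m : ℤ := ⌈B⌉ with hm
  have key : ∀ P ∈ {P : Polynomial ℤ | P.natDegree ≤ n ∧ polyHeight P ≤ B},
      ∀ i : ℕ, P.coeff i ∈ Set.Icc (-m) m := by
    rintro P ⟨-, hB⟩ i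
    have h1 : |(P.coeff i : ℝ)| ≤ B := (abs_coeff_le_polyHeight P i).trans hB
    have h2 : |P.coeff i| ≤ m := by
      have h3 : |(P.coeff i : ℝ)| ≤ (m : ℝ) := h1.trans (Int.le_ceil B)
      rw [← Int.cast_abs] at h3
      exact_mod_cast h3
    constructor <;> [linarith [neg_abs_le (P.coeff i)]; linarith [le_abs_self (P.coeff i)]]
  have hfin : (Set.pi Set.univ fun _ : Fin (n+1) => (Set.Icc (-m) m)).Finite :=
    Set.Finite.pi fun _ => Set.finite_Icc _ _
  apply Set.Finite.of_finite_image (f := fun P => fun i : Fin (n+1) => P.coeff i)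
  · apply hfin.subset
    rintro f ⟨P, hP, rfl⟩
    intro i _
    exact key P hP i
  · rintro P hP P' hP' heq
    apply Polynomial.ext
    intro i
    rcases lt_or_ge i (n+1) with hi|hi
    · exact congrFun heq ⟨i, hi⟩
    · rw [Polynomial.coeff_eq_zero_of_natDegree_lt (lt_of_le_of_lt hP.1 hi),
        Polynomial.coeff_eq_zero_of_natDegree_lt (lt_of_le_of_lt hP'.1 hi)]

lemma exists_height_gt {S : Set (Polynomial ℤ)} (hS : S.Infinite)
    (hdeg : ∀ P ∈ S, P.natDegree ≤ 2) (B : ℝ) : ∃ P ∈ S, B < polyHeight P := by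
  by_contra h; push_neg at h
  exact hS ((finite_polys 2 B).subset fun P hP => ⟨hdeg P hP, h P hP⟩)




lemma norm_intCast_le (P : Polynomial ℤ) (i : ℕ) : ‖((P.coeff i : ℤ) : ℂ)‖ ≤ polyHeight P := by
  rw [show ((P.coeff i : ℤ) : ℂ) = ((P.coeff i : ℝ) : ℂ) by push_cast; ring, Complex.norm_real,
    Real.norm_eq_abs]
  exact abs_coeff_le_polyHeight P i

lemma aeval_complex_eq {Q : Polynomial ℤ} (hQ : Q.natDegree ≤ 2) (γ : ℂ) :
    Polynomial.aeval γ Q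
      = (Q.coeff 0 : ℂ) + (Q.coeff 1 : ℂ) * γ + (Q.coeff 2 : ℂ) * γ ^ 2 := by
  rw [Polynomial.aeval_eq_sum_range' (show Q.natDegree < 3 by omega)]
  simp [Finset.sum_range_succ, zsmul_eq_mul]

lemma norm_aeval_complex_le {Q : Polynomial ℤ} (hQ : Q.natDegree ≤ 2) (γ : ℂ) :
    ‖Polynomial.aeval γ Q‖ ≤ 3 * polyHeight Q * max 1 ‖γ‖ ^ 2 := by
  rw [aeval_complex_eq hQ]
  set m := max 1 ‖γ‖ with hm
  have hm1 : (1:ℝ) ≤ m := le_max_left _ _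
  have hγ : ‖γ‖ ≤ m := le_max_right _ _
  have hγ0 : (0:ℝ) ≤ ‖γ‖ := norm_nonneg _
  have h0 := norm_intCast_le Q 0
  have h1 := norm_intCast_le Q 1
  have h2 := norm_intCast_le Q 2
  have hH0 : (0:ℝ) ≤ polyHeight Q := polyHeight_nonneg Q
  calc ‖(Q.coeff 0 : ℂ) + (Q.coeff 1 : ℂ) * γ + (Q.coeff 2 : ℂ) * γ ^ 2‖
      ≤ ‖(Q.coeff 0 : ℂ) + (Q.coeff 1 : ℂ) * γ‖ + ‖(Q.coeff 2 : ℂ) * γ ^ 2‖ := norm_add_le _ _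
    _ ≤ ‖(Q.coeff 0 : ℂ)‖ + ‖(Q.coeff 1 : ℂ) * γ‖ + ‖(Q.coeff 2 : ℂ) * γ ^ 2‖ := by
        have := norm_add_le ((Q.coeff 0 : ℂ)) ((Q.coeff 1 : ℂ) * γ); linarith
    _ = ‖(Q.coeff 0 : ℂ)‖ + ‖(Q.coeff 1 : ℂ)‖ * ‖γ‖ + ‖(Q.coeff 2 : ℂ)‖ * ‖γ‖ ^ 2 := by
        rw [norm_mul, norm_mul, norm_pow]
    _ ≤ 3 * polyHeight Q * m ^ 2 := by
        have hm0 : (0:ℝ) ≤ m := by linarith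
        have hm2 : 1 ≤ m^2 := by nlinarith
        have hmm : m ≤ m^2 := by nlinarith
        have c0 : ‖(Q.coeff 0 : ℂ)‖ ≤ polyHeight Q * m^2 :=
          h0.trans (by nlinarith)
        have c1 : ‖(Q.coeff 1 : ℂ)‖ * ‖γ‖ ≤ polyHeight Q * m^2 := by
          have := mul_le_mul h1 hγ hγ0 hH0
          nlinarith
        have c2 : ‖(Q.coeff 2 : ℂ)‖ * ‖γ‖^2 ≤ polyHeight Q * m^2 := by
          have hg2 : ‖γ‖^2 ≤ m^2 := by nlinarith
          exact mul_le_mul h2 hg2 (by positivity) hH0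
        linarith

lemma abs_aeval_sub_le {Q : Polynomial ℤ} (hQ : Q.natDegree ≤ 3) {ξ α : ℝ} (hd : |ξ - α| ≤ 1) :
    |Polynomial.aeval ξ Q - Polynomial.aeval α Q|
      ≤ 6 * (|ξ| + 1) ^ 2 * polyHeight Q * |ξ - α| := by
  have hev : ∀ x : ℝ, Polynomial.aeval x Q
      = (Q.coeff 0 : ℝ) + (Q.coeff 1 : ℝ) * x + (Q.coeff 2 : ℝ) * x ^ 2
        + (Q.coeff 3 : ℝ) * x ^ 3 := by
    intro x
    rw [Polynomial.aeval_eq_sum_range' (show Q.natDegree < 4 by omega)]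
    simp [Finset.sum_range_succ, zsmul_eq_mul]
  set K := |ξ| + 1 with hK
  have hK1 : (1:ℝ) ≤ K := by rw [hK]; linarith [abs_nonneg ξ]
  have hξK : |ξ| ≤ K := by rw [hK]; linarith
  have hαK : |α| ≤ K := by
    have : |α| ≤ |ξ| + |ξ - α| := by
      have := abs_sub_abs_le_abs_sub α ξ
      have h2 : |α - ξ| = |ξ - α| := abs_sub_comm _ _
      linarith
    linarith
  have key : Polynomial.aeval ξ Q - Polynomial.aeval α Q
      = (Q.coeff 1 : ℝ) * (ξ - α) + (Q.coeff 2 : ℝ) * ((ξ - α) * (ξ + α))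
        + (Q.coeff 3 : ℝ) * ((ξ - α) * (ξ^2 + ξ*α + α^2)) := by
    rw [hev ξ, hev α]; ring
  rw [key]
  have h1 := abs_coeff_le_polyHeight Q 1
  have h2 := abs_coeff_le_polyHeight Q 2
  have h3 := abs_coeff_le_polyHeight Q 3
  have hH0 : (0:ℝ) ≤ polyHeight Q := polyHeight_nonneg Q
  have ht0 : (0:ℝ) ≤ |ξ - α| := abs_nonneg _
  have e2 : |ξ + α| ≤ 2 * K := by
    have := abs_add_le ξ α; linarith
  have e3 : |ξ^2 + ξ*α + α^2| ≤ 3 * K^2 := by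
    have a1 : |ξ^2| ≤ K^2 := by rw [abs_pow]; exact pow_le_pow_left₀ (abs_nonneg _) hξK 2
    have a2 : |α^2| ≤ K^2 := by rw [abs_pow]; exact pow_le_pow_left₀ (abs_nonneg _) hαK 2
    have a3 : |ξ*α| ≤ K^2 := by
      rw [abs_mul]
      calc |ξ| * |α| ≤ K*K := mul_le_mul hξK hαK (abs_nonneg _) (by linarith)
        _ = K^2 := by ring
    have t1 := abs_add_le (ξ^2 + ξ*α) (α^2)
    have t2 := abs_add_le (ξ^2) (ξ*α)
    linarith
  calc |(Q.coeff 1 : ℝ) * (ξ - α) + (Q.coeff 2 : ℝ) * ((ξ - α) * (ξ + α))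
        + (Q.coeff 3 : ℝ) * ((ξ - α) * (ξ^2 + ξ*α + α^2))|
      ≤ |(Q.coeff 1 : ℝ) * (ξ - α)| + |(Q.coeff 2 : ℝ) * ((ξ - α) * (ξ + α))|
        + |(Q.coeff 3 : ℝ) * ((ξ - α) * (ξ^2 + ξ*α + α^2))| := by
        have t1 := abs_add_le ((Q.coeff 1 : ℝ) * (ξ - α)) ((Q.coeff 2 : ℝ) * ((ξ - α) * (ξ + α)))
        have t2 := abs_add_le ((Q.coeff 1 : ℝ) * (ξ - α) + (Q.coeff 2 : ℝ) * ((ξ - α) * (ξ + α)))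
          ((Q.coeff 3 : ℝ) * ((ξ - α) * (ξ^2 + ξ*α + α^2)))
        linarith
    _ ≤ polyHeight Q * |ξ - α| + polyHeight Q * (|ξ - α| * (2*K))
        + polyHeight Q * (|ξ - α| * (3*K^2)) := by
        rw [abs_mul, abs_mul, abs_mul, abs_mul, abs_mul]
        have b1 : |(Q.coeff 1 : ℝ)| * |ξ - α| ≤ polyHeight Q * |ξ - α| :=
          mul_le_mul_of_nonneg_right h1 ht0
        have b2 : |(Q.coeff 2 : ℝ)| * (|ξ - α| * |ξ + α|) ≤ polyHeight Q * (|ξ - α| * (2*K)) := by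
          apply mul_le_mul h2 (mul_le_mul_of_nonneg_left e2 ht0)
            (by positivity) hH0
        have b3 : |(Q.coeff 3 : ℝ)| * (|ξ - α| * |ξ^2 + ξ*α + α^2|)
            ≤ polyHeight Q * (|ξ - α| * (3*K^2)) := by
          apply mul_le_mul h3 (mul_le_mul_of_nonneg_left e3 ht0) (by positivity) hH0
        linarith
    _ = polyHeight Q * |ξ - α| * (1 + 2*K + 3*K^2) := by ring
    _ ≤ polyHeight Q * |ξ - α| * (6 * K^2) := by
        have hc : 1 + 2*K + 3*K^2 ≤ 6*K^2 := by nlinarith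
        exact mul_le_mul_of_nonneg_left hc (by positivity)
    _ = 6 * K ^ 2 * polyHeight Q * |ξ - α| := by ring



lemma mahler3_sorted (a g1 g2 g3 : ℂ) (H : ℝ) (ha : 1 ≤ ‖a‖)
    (hb : ‖a*(g1+g2+g3)‖ ≤ H) (hc : ‖a*(g1*g2+g1*g3+g2*g3)‖ ≤ H)
    (hd : ‖a*(g1*g2*g3)‖ ≤ H) (hH : ‖a‖ ≤ H)
    (h12 : ‖g2‖ ≤ ‖g1‖) (h23 : ‖g3‖ ≤ ‖g2‖) :
    ‖a‖ * (max 1 ‖g1‖ * (max 1 ‖g2‖ * max 1 ‖g3‖)) ≤ 3 * H := by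
  rw [norm_mul] at hb hc hd
  have hA0 : (0:ℝ) < ‖a‖ := lt_of_lt_of_le one_pos ha
  have hH1 : (1:ℝ) ≤ H := ha.trans hH
  have n2 : (0:ℝ) ≤ ‖g2‖ := norm_nonneg _
  have n3 : (0:ℝ) ≤ ‖g3‖ := norm_nonneg _
  rcases le_or_gt ‖g1‖ 1 with hm1 | hm1
  · rw [max_eq_left hm1, max_eq_left (h12.trans hm1), max_eq_left ((h23.trans h12).trans hm1)]
    have : ‖a‖ * (1*(1*1)) = ‖a‖ := by ring
    rw [this]; linarith
  · rw [max_eq_right hm1.le]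
    have tri1 : ‖g1‖ ≤ ‖g1+g2+g3‖ + ‖g2‖ + ‖g3‖ := by
      have h : g1 = (g1+g2+g3) - g2 - g3 := by ring
      calc ‖g1‖ = ‖(g1+g2+g3) - g2 - g3‖ := by rw [← h]
        _ ≤ ‖(g1+g2+g3) - g2‖ + ‖g3‖ := norm_sub_le _ _
        _ ≤ ‖g1+g2+g3‖ + ‖g2‖ + ‖g3‖ := by linarith [norm_sub_le (g1+g2+g3) g2]
    rcases le_or_gt ‖g2‖ 1 with hm2 | hm2
    · rw [max_eq_left hm2, max_eq_left (h23.trans hm2)]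
      have k1 : ‖a‖*‖g1‖ ≤ ‖a‖*(‖g1+g2+g3‖ + ‖g2‖ + ‖g3‖) :=
        mul_le_mul_of_nonneg_left tri1 hA0.le
      have k2 : ‖a‖*‖g2‖ ≤ ‖a‖ := by nlinarith
      have k3 : ‖a‖*‖g3‖ ≤ ‖a‖ := by nlinarith [h23.trans hm2]
      calc ‖a‖ * (‖g1‖*(1*1)) = ‖a‖*‖g1‖ := by ring
        _ ≤ ‖a‖*‖g1+g2+g3‖ + ‖a‖*‖g2‖ + ‖a‖*‖g3‖ := by nlinarith
        _ ≤ 3 * H := by linarith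
    · rw [max_eq_right hm2.le]
      rcases le_or_gt ‖g3‖ 1 with hm3 | hm3
      · rw [max_eq_left hm3]
        have tri3 : ‖g1+g2‖ ≤ ‖g1+g2+g3‖ + ‖g3‖ := by
          have h : g1+g2 = (g1+g2+g3) - g3 := by ring
          calc ‖g1+g2‖ = ‖(g1+g2+g3) - g3‖ := by rw [← h]
            _ ≤ ‖g1+g2+g3‖ + ‖g3‖ := norm_sub_le _ _
        have tri2 : ‖g1*g2‖ ≤ ‖g1*g2+g1*g3+g2*g3‖ + ‖g1+g2‖*‖g3‖ := by
          have h : g1*g2 = (g1*g2+g1*g3+g2*g3) - (g1+g2)*g3 := by ring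
          calc ‖g1*g2‖ = ‖(g1*g2+g1*g3+g2*g3) - (g1+g2)*g3‖ := by rw [← h]
            _ ≤ ‖g1*g2+g1*g3+g2*g3‖ + ‖(g1+g2)*g3‖ := norm_sub_le _ _
            _ = ‖g1*g2+g1*g3+g2*g3‖ + ‖g1+g2‖*‖g3‖ := by rw [norm_mul]
        have c3' : ‖a‖*‖g1+g2‖ ≤ H + ‖a‖*‖g3‖ := by nlinarith
        have c4 : ‖a‖*(‖g1+g2‖*‖g3‖) ≤ (H + ‖a‖*‖g3‖)*‖g3‖ := by nlinarith
        have c5 : (H + ‖a‖*‖g3‖)*‖g3‖ ≤ H + ‖a‖ := by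
          nlinarith [mul_nonneg (by linarith : (0:ℝ) ≤ H) (by linarith : (0:ℝ) ≤ 1 - ‖g3‖),
            mul_nonneg hA0.le (by nlinarith : (0:ℝ) ≤ 1 - ‖g3‖*‖g3‖)]
        calc ‖a‖ * (‖g1‖*(‖g2‖*1)) = ‖a‖ * (‖g1‖*‖g2‖) := by ring
          _ = ‖a‖ * ‖g1*g2‖ := by rw [norm_mul]
          _ ≤ ‖a‖*‖g1*g2+g1*g3+g2*g3‖ + ‖a‖*(‖g1+g2‖*‖g3‖) := by nlinarith
          _ ≤ H + (H + ‖a‖) := by linarith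
          _ ≤ 3 * H := by linarith
      · rw [max_eq_right hm3.le]
        have : ‖g1*g2*g3‖ = ‖g1‖*(‖g2‖*‖g3‖) := by rw [norm_mul, norm_mul]; ring
        rw [this] at hd
        linarith

lemma mahler3 (a g1 g2 g3 : ℂ) (H : ℝ) (ha : 1 ≤ ‖a‖)
    (hb : ‖a*(g1+g2+g3)‖ ≤ H) (hc : ‖a*(g1*g2+g1*g3+g2*g3)‖ ≤ H)
    (hd : ‖a*(g1*g2*g3)‖ ≤ H) (hH : ‖a‖ ≤ H) :
    ‖a‖ * (max 1 ‖g1‖ * (max 1 ‖g2‖ * max 1 ‖g3‖)) ≤ 3 * H := by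
  rcases le_total ‖g2‖ ‖g1‖ with h12 | h12 <;> rcases le_total ‖g3‖ ‖g2‖ with h23 | h23 <;>
    rcases le_total ‖g3‖ ‖g1‖ with h13 | h13
  · exact mahler3_sorted a g1 g2 g3 H ha hb hc hd hH h12 h23
  · exact mahler3_sorted a g1 g2 g3 H ha hb hc hd hH h12 h23
  · calc ‖a‖ * (max 1 ‖g1‖ * (max 1 ‖g2‖ * max 1 ‖g3‖))
        = ‖a‖ * (max 1 ‖g1‖ * (max 1 ‖g3‖ * max 1 ‖g2‖)) := by ring
      _ ≤ 3 * H := mahler3_sorted a g1 g3 g2 H ha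
          (by rw [show a*(g1+g3+g2) = a*(g1+g2+g3) by ring]; exact hb)
          (by rw [show a*(g1*g3+g1*g2+g3*g2) = a*(g1*g2+g1*g3+g2*g3) by ring]; exact hc)
          (by rw [show a*(g1*g3*g2) = a*(g1*g2*g3) by ring]; exact hd) hH h13 h23
  · calc ‖a‖ * (max 1 ‖g1‖ * (max 1 ‖g2‖ * max 1 ‖g3‖))
        = ‖a‖ * (max 1 ‖g3‖ * (max 1 ‖g1‖ * max 1 ‖g2‖)) := by ring
      _ ≤ 3 * H := mahler3_sorted a g3 g1 g2 H ha
          (by rw [show a*(g3+g1+g2) = a*(g1+g2+g3) by ring]; exact hb)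
          (by rw [show a*(g3*g1+g3*g2+g1*g2) = a*(g1*g2+g1*g3+g2*g3) by ring]; exact hc)
          (by rw [show a*(g3*g1*g2) = a*(g1*g2*g3) by ring]; exact hd) hH h13 h12
  · calc ‖a‖ * (max 1 ‖g1‖ * (max 1 ‖g2‖ * max 1 ‖g3‖))
        = ‖a‖ * (max 1 ‖g2‖ * (max 1 ‖g1‖ * max 1 ‖g3‖)) := by ring
      _ ≤ 3 * H := mahler3_sorted a g2 g1 g3 H ha
          (by rw [show a*(g2+g1+g3) = a*(g1+g2+g3) by ring]; exact hb)
          (by rw [show a*(g2*g1+g2*g3+g1*g3) = a*(g1*g2+g1*g3+g2*g3) by ring]; exact hc)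
          (by rw [show a*(g2*g1*g3) = a*(g1*g2*g3) by ring]; exact hd) hH h12 h13
  · calc ‖a‖ * (max 1 ‖g1‖ * (max 1 ‖g2‖ * max 1 ‖g3‖))
        = ‖a‖ * (max 1 ‖g2‖ * (max 1 ‖g3‖ * max 1 ‖g1‖)) := by ring
      _ ≤ 3 * H := mahler3_sorted a g2 g3 g1 H ha
          (by rw [show a*(g2+g3+g1) = a*(g1+g2+g3) by ring]; exact hb)
          (by rw [show a*(g2*g3+g2*g1+g3*g1) = a*(g1*g2+g1*g3+g2*g3) by ring]; exact hc)
          (by rw [show a*(g2*g3*g1) = a*(g1*g2*g3) by ring]; exact hd) hH h23 h13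
  · calc ‖a‖ * (max 1 ‖g1‖ * (max 1 ‖g2‖ * max 1 ‖g3‖))
        = ‖a‖ * (max 1 ‖g3‖ * (max 1 ‖g2‖ * max 1 ‖g1‖)) := by ring
      _ ≤ 3 * H := mahler3_sorted a g3 g2 g1 H ha
          (by rw [show a*(g3+g2+g1) = a*(g1+g2+g3) by ring]; exact hb)
          (by rw [show a*(g3*g2+g3*g1+g2*g1) = a*(g1*g2+g1*g3+g2*g3) by ring]; exact hc)
          (by rw [show a*(g3*g2*g1) = a*(g1*g2*g3) by ring]; exact hd) hH h23 h12
  · calc ‖a‖ * (max 1 ‖g1‖ * (max 1 ‖g2‖ * max 1 ‖g3‖))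
        = ‖a‖ * (max 1 ‖g3‖ * (max 1 ‖g2‖ * max 1 ‖g1‖)) := by ring
      _ ≤ 3 * H := mahler3_sorted a g3 g2 g1 H ha
          (by rw [show a*(g3+g2+g1) = a*(g1+g2+g3) by ring]; exact hb)
          (by rw [show a*(g3*g2+g3*g1+g2*g1) = a*(g1*g2+g1*g3+g2*g3) by ring]; exact hc)
          (by rw [show a*(g3*g2*g1) = a*(g1*g2*g3) by ring]; exact hd) hH h23 h12

lemma mahler2 (a g1 g2 : ℂ) (H : ℝ) (ha : 1 ≤ ‖a‖)
    (hb : ‖a*(g1+g2)‖ ≤ H) (hc : ‖a*(g1*g2)‖ ≤ H) (hH : ‖a‖ ≤ H) :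
    ‖a‖ * (max 1 ‖g1‖ * max 1 ‖g2‖) ≤ 2 * H := by
  rw [norm_mul] at hb hc
  have hA0 : (0:ℝ) < ‖a‖ := lt_of_lt_of_le one_pos ha
  have hH1 : (1:ℝ) ≤ H := ha.trans hH
  have n1 : (0:ℝ) ≤ ‖g1‖ := norm_nonneg _
  have n2 : (0:ℝ) ≤ ‖g2‖ := norm_nonneg _
  have one_case : ∀ x y : ℂ, ‖x+y‖ = ‖g1+g2‖ → 1 < ‖x‖ → ‖y‖ ≤ 1 → ‖a‖ * ‖x‖ ≤ 2*H := by
    intro x y hxy hx hy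
    have tri : ‖x‖ ≤ ‖x+y‖ + ‖y‖ := by
      have h : x = (x+y) - y := by ring
      calc ‖x‖ = ‖(x+y) - y‖ := by rw [← h]
        _ ≤ ‖x+y‖ + ‖y‖ := norm_sub_le _ _
    rw [hxy] at tri
    nlinarith [norm_nonneg y]
  rcases le_or_gt ‖g1‖ 1 with hm1 | hm1 <;> rcases le_or_gt ‖g2‖ 1 with hm2 | hm2
  · rw [max_eq_left hm1, max_eq_left hm2]
    have : ‖a‖ * (1*1) = ‖a‖ := by ring
    rw [this]; linarith
  · rw [max_eq_left hm1, max_eq_right hm2.le]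
    have := one_case g2 g1 (by rw [show g2+g1 = g1+g2 by ring]) hm2 hm1
    calc ‖a‖ * (1*‖g2‖) = ‖a‖*‖g2‖ := by ring
      _ ≤ 2*H := this
  · rw [max_eq_right hm1.le, max_eq_left hm2]
    have := one_case g1 g2 rfl hm1 hm2
    calc ‖a‖ * (‖g1‖*1) = ‖a‖*‖g1‖ := by ring
      _ ≤ 2*H := this
  · rw [max_eq_right hm1.le, max_eq_right hm2.le]
    have : ‖g1*g2‖ = ‖g1‖*‖g2‖ := norm_mul _ _
    rw [this] at hc
    nlinarith




lemma primitive_of_irreducible {P : Polynomial ℤ} (hP : Irreducible P)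
    (hdeg : 1 ≤ P.natDegree) : P.IsPrimitive := by
  intro r hr
  obtain ⟨t, ht⟩ := hr
  rcases hP.isUnit_or_isUnit ht with h | h
  · exact Polynomial.isUnit_C.mp h
  · exfalso
    have hr0 : r ≠ 0 := by
      rintro rfl
      simp only [map_zero, zero_mul] at ht
      exact hP.ne_zero ht
    have ht0 : t ≠ 0 := h.ne_zero
    have := Polynomial.natDegree_mul (p := C r) (q := t) (by simpa using hr0) ht0
    rw [← ht] at this
    rw [Polynomial.natDegree_eq_zero_of_isUnit h, Polynomial.natDegree_C] at this
    omega

lemma dvd_int_of_dvd_rat {P Q : Polynomial ℤ} (hPprim : P.IsPrimitive) (hQ0 : Q ≠ 0)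
    (h : P.map (Int.castRingHom ℚ) ∣ Q.map (Int.castRingHom ℚ)) : P ∣ Q := by
  have hc0 : (Q.content : ℚ) ≠ 0 := by
    simpa using (fun hh => hQ0 (Polynomial.content_eq_zero_iff.mp hh))
  have hu : IsUnit (C (Q.content : ℚ)) := Polynomial.isUnit_C.mpr (isUnit_iff_ne_zero.mpr hc0)
  have hQsplit : Q.map (Int.castRingHom ℚ)
      = C (Q.content : ℚ) * Q.primPart.map (Int.castRingHom ℚ) := by
    conv_lhs => rw [Q.eq_C_content_mul_primPart]
    rw [Polynomial.map_mul, Polynomial.map_C]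
    rfl
  have h2 : P.map (Int.castRingHom ℚ) ∣ Q.primPart.map (Int.castRingHom ℚ) := by
    rw [hQsplit] at h
    exact hu.dvd_mul_left.mp h
  have h3 : P ∣ Q.primPart :=
    (Polynomial.IsPrimitive.Int.dvd_iff_map_cast_dvd_map_cast P Q.primPart hPprim).mpr h2
  exact h3.trans Q.primPart_dvd

lemma aeval_complex_of_real (α : ℝ) (P : Polynomial ℤ) :
    Polynomial.aeval (α : ℂ) P = ((Polynomial.aeval α P : ℝ) : ℂ) := by
  rw [show ((α : ℂ)) = algebraMap ℝ ℂ α from rfl, Polynomial.aeval_algebraMap_apply]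
  rfl

lemma coprime_complex {P Q : Polynomial ℤ} (hPirr : Irreducible P) (hdeg : 1 ≤ P.natDegree)
    (hQ0 : Q ≠ 0) (hndvd : ¬ P ∣ Q) :
    ∀ γ : ℂ, Polynomial.aeval γ P = 0 → Polynomial.aeval γ Q ≠ 0 := by
  have hprim := primitive_of_irreducible hPirr hdeg
  have hPirrQ : Irreducible (P.map (Int.castRingHom ℚ)) :=
    (Polynomial.IsPrimitive.Int.irreducible_iff_irreducible_map_cast hprim).mp hPirr
  have hcop : IsCoprime (P.map (Int.castRingHom ℚ)) (Q.map (Int.castRingHom ℚ)) :=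
    hPirrQ.coprime_iff_not_dvd.mpr (fun hd => hndvd (dvd_int_of_dvd_rat hprim hQ0 hd))
  have hcopC := hcop.map (Polynomial.mapRingHom (algebraMap ℚ ℂ))
  obtain ⟨u, v, huv⟩ := hcopC
  intro γ hPγ hQγ
  have hmm : ∀ R : Polynomial ℤ, (Polynomial.mapRingHom (algebraMap ℚ ℂ))
      (R.map (Int.castRingHom ℚ)) = R.map (Int.castRingHom ℂ) := by
    intro R
    rw [Polynomial.coe_mapRingHom, Polynomial.map_map]
    congr 1
  rw [hmm, hmm] at huv
  have heval : ∀ R : Polynomial ℤ, Polynomial.eval γ (R.map (Int.castRingHom ℂ))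
      = Polynomial.aeval γ R := by
    intro R
    rw [Polynomial.eval_map, Polynomial.aeval_def]
    rfl
  have := congrArg (Polynomial.eval γ) huv
  simp only [Polynomial.eval_add, Polynomial.eval_mul, Polynomial.eval_one, heval,
    hPγ, hQγ, mul_zero, add_zero, zero_add] at this
  exact one_ne_zero this.symm




lemma norm_intCast (n : ℤ) : ‖((n : ℤ) : ℂ)‖ = |(n : ℝ)| := by
  rw [show ((n : ℤ) : ℂ) = ((n : ℝ) : ℂ) by push_cast; ring, Complex.norm_real,
    Real.norm_eq_abs]

set_option maxHeartbeats 1000000 in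
lemma key_cubic {P Q : Polynomial ℤ} (hPirr : Irreducible P) (hP3 : P.natDegree = 3)
    (hQd : Q.natDegree ≤ 2) (hQ0 : Q ≠ 0) (hndvd : ¬ P ∣ Q) {α : ℝ}
    (hroot : Polynomial.aeval α P = 0) :
    1 ≤ 81 * polyHeight Q ^ 2 * polyHeight P ^ 2 * |Polynomial.aeval α Q| := by
  classical
  set f := P.map (Int.castRingHom ℂ) with hf
  have hP0 : P ≠ 0 := hPirr.ne_zero
  have hf0 : f ≠ 0 := by
    intro h
    exact hP0 (Polynomial.map_injective _ Int.cast_injective (by simpa using h))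
  have hfdeg : f.natDegree = 3 := by
    rw [hf, Polynomial.natDegree_map_eq_of_injective Int.cast_injective, hP3]
  have hsplit : f.Splits := IsAlgClosed.splits f
  have hcard : f.roots.card = 3 :=
    (Polynomial.splits_iff_card_roots.mp hsplit).trans hfdeg
  have heval : ∀ γ : ℂ, Polynomial.eval γ f = Polynomial.aeval γ P := by
    intro γ; rw [hf, Polynomial.eval_map, Polynomial.aeval_def]; rfl
  have hαroot : (α : ℂ) ∈ f.roots := by
    rw [Polynomial.mem_roots']
    refine ⟨hf0, ?_⟩
    show Polynomial.eval (α:ℂ) f = 0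
    rw [heval, aeval_complex_of_real, hroot]
    simp
  obtain ⟨s, hs⟩ := Multiset.exists_cons_of_mem hαroot
  have hscard : s.card = 2 := by
    have h2 := hcard; rw [hs] at h2; simpa using h2
  obtain ⟨g2, g3, hgg⟩ := Multiset.card_eq_two.mp hscard
  have hroots : f.roots = (α:ℂ) ::ₘ g2 ::ₘ {g3} := by
    rw [hs, hgg]; rfl
  have hg2root : Polynomial.aeval g2 P = 0 := by
    rw [← heval]
    have : g2 ∈ f.roots := by rw [hroots]; simp
    exact (Polynomial.mem_roots'.mp this).2
  have hg3root : Polynomial.aeval g3 P = 0 := by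
    rw [← heval]
    have : g3 ∈ f.roots := by rw [hroots]; simp
    exact (Polynomial.mem_roots'.mp this).2
  set a0 := P.coeff 3 with ha0
  set b0 := P.coeff 2 with hb0
  set c0 := P.coeff 1 with hc0
  set d0 := P.coeff 0 with hd0
  set u := Q.coeff 2 with hu
  set v := Q.coeff 1 with hv
  set w := Q.coeff 0 with hw
  set A : ℂ := ((a0 : ℤ) : ℂ) with hAdef
  have hA : f.leadingCoeff = A := by
    rw [Polynomial.leadingCoeff, hfdeg, hf, Polynomial.coeff_map]; rfl
  have hfact : f = Polynomial.C A *
      ((Polynomial.X - Polynomial.C (α:ℂ)) *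
        ((Polynomial.X - Polynomial.C g2) * (Polynomial.X - Polynomial.C g3))) := by
    calc f = Polynomial.C f.leadingCoeff * (f.roots.map fun a => Polynomial.X - Polynomial.C a).prod :=
          hsplit.eq_prod_roots
      _ = _ := by rw [hroots, hA]; simp [Multiset.prod_cons]
  have hexp : f = Polynomial.C A * Polynomial.X^3
      + Polynomial.C (-(A*((α:ℂ)+g2+g3))) * Polynomial.X^2
      + Polynomial.C (A*((α:ℂ)*g2+(α:ℂ)*g3+g2*g3)) * Polynomial.X
      + Polynomial.C (-(A*((α:ℂ)*g2*g3))) := by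
    rw [hfact]
    simp only [Polynomial.C_neg, Polynomial.C_mul, Polynomial.C_add]
    ring
  have hcoeff : ∀ j, f.coeff j = ((P.coeff j : ℤ) : ℂ) := by
    intro j; rw [hf, Polynomial.coeff_map]; rfl
  have hb : ((b0 : ℤ) : ℂ) = -(A*((α:ℂ)+g2+g3)) := by
    have h2 := congrArg (fun p => Polynomial.coeff p 2) hexp
    simp only [hcoeff 2] at h2
    rw [hb0, h2]
    simp only [Polynomial.coeff_add, Polynomial.coeff_C_mul, Polynomial.coeff_X_pow,
      Polynomial.coeff_X, Polynomial.coeff_C]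
    norm_num
  have hc : ((c0 : ℤ) : ℂ) = A*((α:ℂ)*g2+(α:ℂ)*g3+g2*g3) := by
    have h2 := congrArg (fun p => Polynomial.coeff p 1) hexp
    simp only [hcoeff 1] at h2
    rw [hc0, h2]
    simp only [Polynomial.coeff_add, Polynomial.coeff_C_mul, Polynomial.coeff_X_pow,
      Polynomial.coeff_X, Polynomial.coeff_C]
    norm_num
  have hd : ((d0 : ℤ) : ℂ) = -(A*((α:ℂ)*g2*g3)) := by
    have h2 := congrArg (fun p => Polynomial.coeff p 0) hexp
    simp only [hcoeff 0] at h2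
    rw [hd0, h2]
    simp only [Polynomial.coeff_add, Polynomial.coeff_C_mul, Polynomial.coeff_X_pow,
      Polynomial.coeff_X, Polynomial.coeff_C]
    norm_num
  set N : ℤ := d0^2*u^3 - c0*d0*u^2*v + c0^2*u^2*w + b0*d0*u*v^2 - 2*b0*d0*u^2*w
    - b0*c0*u*v*w + b0^2*u*w^2 - a0*d0*v^3 + 3*a0*d0*u*v*w + a0*c0*v^2*w
    - 2*a0*c0*u*w^2 - a0*b0*v*w^2 + a0^2*w^3 with hN
  have hNC : (N : ℂ) = A^2 * (Polynomial.aeval ((α:ℝ):ℂ) Q *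
      (Polynomial.aeval g2 Q * Polynomial.aeval g3 Q)) := by
    rw [aeval_complex_eq hQd, aeval_complex_eq hQd, aeval_complex_eq hQd, hN]
    push_cast
    rw [hb, hc, hd, hAdef]
    ring
  have hA0 : a0 ≠ 0 := by
    rw [ha0, ← hP3]
    exact Polynomial.leadingCoeff_ne_zero.mpr hP0
  have hAne : A ≠ 0 := by
    rw [hAdef]
    exact_mod_cast hA0
  have hqα := coprime_complex hPirr (by omega) hQ0 hndvd ((α:ℝ):ℂ)
    (by rw [aeval_complex_of_real, hroot]; simp)
  have hq2ne := coprime_complex hPirr (by omega) hQ0 hndvd g2 hg2root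
  have hq3ne := coprime_complex hPirr (by omega) hQ0 hndvd g3 hg3root
  have hN0 : N ≠ 0 := by
    intro h0
    rw [h0] at hNC
    exact (mul_ne_zero (pow_ne_zero 2 hAne)
      (mul_ne_zero hqα (mul_ne_zero hq2ne hq3ne))) (by simpa using hNC.symm)
  have hNge : (1:ℝ) ≤ ‖(N:ℂ)‖ := by
    rw [norm_intCast]
    rw [← Int.cast_abs]
    exact_mod_cast Int.one_le_abs hN0
  have hnorm : ‖(N:ℂ)‖ = ‖A‖^2 * (‖Polynomial.aeval ((α:ℝ):ℂ) Q‖ *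
      (‖Polynomial.aeval g2 Q‖ * ‖Polynomial.aeval g3 Q‖)) := by
    rw [hNC, norm_mul, norm_pow, norm_mul, norm_mul]
  have hA1 : 1 ≤ ‖A‖ := by
    rw [hAdef, norm_intCast, ← Int.cast_abs]
    exact_mod_cast Int.one_le_abs hA0
  have hHP : ‖A‖ ≤ polyHeight P := by
    rw [hAdef, norm_intCast]
    exact abs_coeff_le_polyHeight P 3
  have hmb : ‖A*((α:ℂ)+g2+g3)‖ ≤ polyHeight P := by
    rw [show A*(((α:ℝ):ℂ)+g2+g3) = -(((b0 : ℤ):ℂ)) by rw [hb, neg_neg], norm_neg, norm_intCast]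
    exact abs_coeff_le_polyHeight P 2
  have hmc : ‖A*((α:ℂ)*g2+(α:ℂ)*g3+g2*g3)‖ ≤ polyHeight P := by
    rw [show A*(((α:ℝ):ℂ)*g2+((α:ℝ):ℂ)*g3+g2*g3) = ((c0 : ℤ):ℂ) by rw [hc], norm_intCast]
    exact abs_coeff_le_polyHeight P 1
  have hmd : ‖A*((α:ℂ)*g2*g3)‖ ≤ polyHeight P := by
    rw [show A*(((α:ℝ):ℂ)*g2*g3) = -(((d0 : ℤ):ℂ)) by rw [hd, neg_neg], norm_neg, norm_intCast]
    exact abs_coeff_le_polyHeight P 0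
  have hM := mahler3 A ((α:ℝ):ℂ) g2 g3 (polyHeight P) hA1 hmb hmc hmd hHP
  set M1 := max 1 ‖((α:ℝ):ℂ)‖ with hM1
  set M2 := max 1 ‖g2‖ with hM2
  set M3 := max 1 ‖g3‖ with hM3
  have hM1one : 1 ≤ M1 := le_max_left _ _
  have hM2one : 1 ≤ M2 := le_max_left _ _
  have hM3one : 1 ≤ M3 := le_max_left _ _
  have hq2 := norm_aeval_complex_le hQd g2
  have hq3 := norm_aeval_complex_le hQd g3
  rw [← hM2] at hq2
  rw [← hM3] at hq3
  have hA0' : (0:ℝ) < ‖A‖ := lt_of_lt_of_le one_pos hA1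
  have hhQ : (0:ℝ) ≤ polyHeight Q := polyHeight_nonneg Q
  have hhP : (0:ℝ) ≤ polyHeight P := polyHeight_nonneg P
  have e1 : ‖A‖*(M2*M3) ≤ 3*(polyHeight P) := by
    have hpos := mul_nonneg (mul_nonneg hA0'.le
      (mul_nonneg (le_trans zero_le_one hM2one) (le_trans zero_le_one hM3one)))
      (sub_nonneg.mpr hM1one)
    nlinarith [hpos, hM]
  have e2 : ‖Polynomial.aeval g2 Q‖ * ‖Polynomial.aeval g3 Q‖
      ≤ 9*(polyHeight Q)^2*((M2*M3)^2) := by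
    have := mul_le_mul hq2 hq3 (norm_nonneg _) (by positivity)
    nlinarith [this]
  have e3 : ‖A‖^2*(‖Polynomial.aeval g2 Q‖ * ‖Polynomial.aeval g3 Q‖)
      ≤ 81*(polyHeight Q)^2*(polyHeight P)^2 := by
    have s1 : ‖A‖^2*(‖Polynomial.aeval g2 Q‖ * ‖Polynomial.aeval g3 Q‖)
        ≤ ‖A‖^2*(9*(polyHeight Q)^2*((M2*M3)^2)) :=
      mul_le_mul_of_nonneg_left e2 (by positivity)
    have s2 : (‖A‖*(M2*M3))^2 ≤ (3*(polyHeight P))^2 :=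
      pow_le_pow_left₀ (by positivity) e1 2
    calc ‖A‖^2*(‖Polynomial.aeval g2 Q‖ * ‖Polynomial.aeval g3 Q‖)
        ≤ ‖A‖^2*(9*(polyHeight Q)^2*((M2*M3)^2)) := s1
      _ = 9*(polyHeight Q)^2*((‖A‖*(M2*M3))^2) := by ring
      _ ≤ 9*(polyHeight Q)^2*((3*(polyHeight P))^2) :=
          mul_le_mul_of_nonneg_left s2 (by positivity)
      _ = 81*(polyHeight Q)^2*(polyHeight P)^2 := by ring
  have hfinal : (1:ℝ) ≤ 81*(polyHeight Q)^2*(polyHeight P)^2*‖Polynomial.aeval ((α:ℝ):ℂ) Q‖ := by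
    have hnn : (0:ℝ) ≤ ‖Polynomial.aeval ((α:ℝ):ℂ) Q‖ := norm_nonneg _
    rw [hnorm] at hNge
    calc (1:ℝ) ≤ ‖A‖^2 * (‖Polynomial.aeval ((α:ℝ):ℂ) Q‖ *
          (‖Polynomial.aeval g2 Q‖ * ‖Polynomial.aeval g3 Q‖)) := hNge
      _ = ‖Polynomial.aeval ((α:ℝ):ℂ) Q‖ *
          (‖A‖^2 * (‖Polynomial.aeval g2 Q‖ * ‖Polynomial.aeval g3 Q‖)) := by ring
      _ ≤ ‖Polynomial.aeval ((α:ℝ):ℂ) Q‖ * (81*(polyHeight Q)^2*(polyHeight P)^2) :=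
          mul_le_mul_of_nonneg_left e3 hnn
      _ = 81*(polyHeight Q)^2*(polyHeight P)^2*‖Polynomial.aeval ((α:ℝ):ℂ) Q‖ := by ring
  have : ‖Polynomial.aeval ((α:ℝ):ℂ) Q‖ = |Polynomial.aeval α Q| := by
    rw [aeval_complex_of_real, Complex.norm_real, Real.norm_eq_abs]
  rw [this] at hfinal
  exact hfinal


set_option maxHeartbeats 1000000 in
lemma key_quadratic {P Q : Polynomial ℤ} (hPirr : Irreducible P) (hP2 : P.natDegree = 2)
    (hQd : Q.natDegree ≤ 2) (hQ0 : Q ≠ 0) (hndvd : ¬ P ∣ Q) {α : ℝ}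
    (hroot : Polynomial.aeval α P = 0) :
    1 ≤ 81 * polyHeight Q ^ 2 * polyHeight P ^ 2 * |Polynomial.aeval α Q| := by
  classical
  set f := P.map (Int.castRingHom ℂ) with hf
  have hP0 : P ≠ 0 := hPirr.ne_zero
  have hf0 : f ≠ 0 := by
    intro h
    exact hP0 (Polynomial.map_injective _ Int.cast_injective (by simpa using h))
  have hfdeg : f.natDegree = 2 := by
    rw [hf, Polynomial.natDegree_map_eq_of_injective Int.cast_injective, hP2]
  have hsplit : f.Splits := IsAlgClosed.splits f
  have hcard : f.roots.card = 2 :=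
    (Polynomial.splits_iff_card_roots.mp hsplit).trans hfdeg
  have heval : ∀ γ : ℂ, Polynomial.eval γ f = Polynomial.aeval γ P := by
    intro γ; rw [hf, Polynomial.eval_map, Polynomial.aeval_def]; rfl
  have hαroot : (α : ℂ) ∈ f.roots := by
    rw [Polynomial.mem_roots']
    refine ⟨hf0, ?_⟩
    show Polynomial.eval (α:ℂ) f = 0
    rw [heval, aeval_complex_of_real, hroot]
    simp
  obtain ⟨s, hs⟩ := Multiset.exists_cons_of_mem hαroot
  have hscard : s.card = 1 := by
    have h2 := hcard; rw [hs] at h2; simpa using h2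
  obtain ⟨g2, hgg⟩ := Multiset.card_eq_one.mp hscard
  have hroots : f.roots = (α:ℂ) ::ₘ {g2} := by rw [hs, hgg]
  have hg2root : Polynomial.aeval g2 P = 0 := by
    rw [← heval]
    have : g2 ∈ f.roots := by rw [hroots]; simp
    exact (Polynomial.mem_roots'.mp this).2
  set a0 := P.coeff 2 with ha0
  set b0 := P.coeff 1 with hb0
  set c0 := P.coeff 0 with hc0
  set u := Q.coeff 2 with hu
  set v := Q.coeff 1 with hv
  set w := Q.coeff 0 with hw
  set A : ℂ := ((a0 : ℤ) : ℂ) with hAdef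
  have hA : f.leadingCoeff = A := by
    rw [Polynomial.leadingCoeff, hfdeg, hf, Polynomial.coeff_map]; rfl
  have hfact : f = Polynomial.C A *
      ((Polynomial.X - Polynomial.C (α:ℂ)) * (Polynomial.X - Polynomial.C g2)) := by
    calc f = Polynomial.C f.leadingCoeff * (f.roots.map fun a => Polynomial.X - Polynomial.C a).prod :=
          hsplit.eq_prod_roots
      _ = _ := by rw [hroots, hA]; simp [Multiset.prod_cons]
  have hexp : f = Polynomial.C A * Polynomial.X^2
      + Polynomial.C (-(A*((α:ℂ)+g2))) * Polynomial.X
      + Polynomial.C (A*((α:ℂ)*g2)) := by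
    rw [hfact]
    simp only [Polynomial.C_neg, Polynomial.C_mul, Polynomial.C_add]
    ring
  have hcoeff : ∀ j, f.coeff j = ((P.coeff j : ℤ) : ℂ) := by
    intro j; rw [hf, Polynomial.coeff_map]; rfl
  have hb : ((b0 : ℤ) : ℂ) = -(A*((α:ℂ)+g2)) := by
    have h2 := congrArg (fun p => Polynomial.coeff p 1) hexp
    simp only [hcoeff 1] at h2
    rw [hb0, h2]
    simp only [Polynomial.coeff_add, Polynomial.coeff_C_mul, Polynomial.coeff_X_pow,
      Polynomial.coeff_X, Polynomial.coeff_C]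
    norm_num
  have hc : ((c0 : ℤ) : ℂ) = A*((α:ℂ)*g2) := by
    have h2 := congrArg (fun p => Polynomial.coeff p 0) hexp
    simp only [hcoeff 0] at h2
    rw [hc0, h2]
    simp only [Polynomial.coeff_add, Polynomial.coeff_C_mul, Polynomial.coeff_X_pow,
      Polynomial.coeff_X, Polynomial.coeff_C]
    norm_num
  set N : ℤ := c0^2*u^2 - b0*c0*u*v + b0^2*u*w + a0*c0*v^2 - 2*a0*c0*u*w - a0*b0*v*w + a0^2*w^2
    with hN
  have hNC : (N : ℂ) = A^2 * (Polynomial.aeval ((α:ℝ):ℂ) Q * Polynomial.aeval g2 Q) := by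
    rw [aeval_complex_eq hQd, aeval_complex_eq hQd, hN]
    push_cast
    rw [hb, hc, hAdef]
    ring
  have hA0 : a0 ≠ 0 := by
    rw [ha0, ← hP2]
    exact Polynomial.leadingCoeff_ne_zero.mpr hP0
  have hAne : A ≠ 0 := by rw [hAdef]; exact_mod_cast hA0
  have hqα := coprime_complex hPirr (by omega) hQ0 hndvd ((α:ℝ):ℂ)
    (by rw [aeval_complex_of_real, hroot]; simp)
  have hq2ne := coprime_complex hPirr (by omega) hQ0 hndvd g2 hg2root
  have hN0 : N ≠ 0 := by
    intro h0
    rw [h0] at hNC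
    exact (mul_ne_zero (pow_ne_zero 2 hAne) (mul_ne_zero hqα hq2ne)) (by simpa using hNC.symm)
  have hNge : (1:ℝ) ≤ ‖(N:ℂ)‖ := by
    rw [norm_intCast, ← Int.cast_abs]
    exact_mod_cast Int.one_le_abs hN0
  have hnorm : ‖(N:ℂ)‖ = ‖A‖^2 * (‖Polynomial.aeval ((α:ℝ):ℂ) Q‖ * ‖Polynomial.aeval g2 Q‖) := by
    rw [hNC, norm_mul, norm_pow, norm_mul]
  have hA1 : 1 ≤ ‖A‖ := by
    rw [hAdef, norm_intCast, ← Int.cast_abs]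
    exact_mod_cast Int.one_le_abs hA0
  have hHP : ‖A‖ ≤ polyHeight P := by
    rw [hAdef, norm_intCast]
    exact abs_coeff_le_polyHeight P 2
  have hmb : ‖A*((α:ℂ)+g2)‖ ≤ polyHeight P := by
    rw [show A*(((α:ℝ):ℂ)+g2) = -(((b0 : ℤ):ℂ)) by rw [hb, neg_neg], norm_neg, norm_intCast]
    exact abs_coeff_le_polyHeight P 1
  have hmc : ‖A*((α:ℂ)*g2)‖ ≤ polyHeight P := by
    rw [show A*(((α:ℝ):ℂ)*g2) = ((c0 : ℤ):ℂ) by rw [hc], norm_intCast]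
    exact abs_coeff_le_polyHeight P 0
  have hM := mahler2 A ((α:ℝ):ℂ) g2 (polyHeight P) hA1 hmb hmc hHP
  set M1 := max 1 ‖((α:ℝ):ℂ)‖ with hM1
  set M2 := max 1 ‖g2‖ with hM2
  have hM1one : 1 ≤ M1 := le_max_left _ _
  have hM2one : 1 ≤ M2 := le_max_left _ _
  have hq2 := norm_aeval_complex_le hQd g2
  rw [← hM2] at hq2
  have hA0' : (0:ℝ) < ‖A‖ := lt_of_lt_of_le one_pos hA1
  have hhQ : (1:ℝ) ≤ polyHeight Q := one_le_polyHeight hQ0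
  have hhP : (0:ℝ) ≤ polyHeight P := polyHeight_nonneg P
  have e1 : ‖A‖*M2 ≤ 2*(polyHeight P) := by
    have hpos := mul_nonneg (mul_nonneg hA0'.le (le_trans zero_le_one hM2one))
      (sub_nonneg.mpr hM1one)
    nlinarith [hpos, hM]
  have e3 : ‖A‖^2 * ‖Polynomial.aeval g2 Q‖ ≤ 81*(polyHeight Q)^2*(polyHeight P)^2 := by
    have s1 : ‖A‖^2 * ‖Polynomial.aeval g2 Q‖ ≤ ‖A‖^2*(3*(polyHeight Q)*M2^2) :=
      mul_le_mul_of_nonneg_left hq2 (by positivity)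
    have s2 : (‖A‖*M2)^2 ≤ (2*(polyHeight P))^2 := pow_le_pow_left₀ (by positivity) e1 2
    calc ‖A‖^2 * ‖Polynomial.aeval g2 Q‖ ≤ ‖A‖^2*(3*(polyHeight Q)*M2^2) := s1
      _ = 3*(polyHeight Q)*((‖A‖*M2)^2) := by ring
      _ ≤ 3*(polyHeight Q)*((2*(polyHeight P))^2) := by
          apply mul_le_mul_of_nonneg_left s2 (by positivity)
      _ = 12*(polyHeight Q)*(polyHeight P)^2 := by ring
      _ ≤ 81*(polyHeight Q)^2*(polyHeight P)^2 := by
          have h12 : 12*(polyHeight Q) ≤ 81*(polyHeight Q)^2 := by nlinarith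
          nlinarith [mul_le_mul_of_nonneg_right h12 (sq_nonneg (polyHeight P))]
  have hfinal : (1:ℝ) ≤ 81*(polyHeight Q)^2*(polyHeight P)^2*‖Polynomial.aeval ((α:ℝ):ℂ) Q‖ := by
    have hnn : (0:ℝ) ≤ ‖Polynomial.aeval ((α:ℝ):ℂ) Q‖ := norm_nonneg _
    rw [hnorm] at hNge
    calc (1:ℝ) ≤ ‖A‖^2 * (‖Polynomial.aeval ((α:ℝ):ℂ) Q‖ * ‖Polynomial.aeval g2 Q‖) := hNge
      _ = ‖Polynomial.aeval ((α:ℝ):ℂ) Q‖ * (‖A‖^2 * ‖Polynomial.aeval g2 Q‖) := by ring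
      _ ≤ ‖Polynomial.aeval ((α:ℝ):ℂ) Q‖ * (81*(polyHeight Q)^2*(polyHeight P)^2) :=
          mul_le_mul_of_nonneg_left e3 hnn
      _ = 81*(polyHeight Q)^2*(polyHeight P)^2*‖Polynomial.aeval ((α:ℝ):ℂ) Q‖ := by ring
  have : ‖Polynomial.aeval ((α:ℝ):ℂ) Q‖ = |Polynomial.aeval α Q| := by
    rw [aeval_complex_of_real, Complex.norm_real, Real.norm_eq_abs]
  rw [this] at hfinal
  exact hfinal

set_option maxHeartbeats 1000000 in
lemma key_linear {P Q : Polynomial ℤ} (hPirr : Irreducible P) (hP1 : P.natDegree = 1)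
    (hQd : Q.natDegree ≤ 2) (hQ0 : Q ≠ 0) (hndvd : ¬ P ∣ Q) {α : ℝ}
    (hroot : Polynomial.aeval α P = 0) :
    1 ≤ 81 * polyHeight Q ^ 2 * polyHeight P ^ 2 * |Polynomial.aeval α Q| := by
  classical
  set f := P.map (Int.castRingHom ℂ) with hf
  have hP0 : P ≠ 0 := hPirr.ne_zero
  have hf0 : f ≠ 0 := by
    intro h
    exact hP0 (Polynomial.map_injective _ Int.cast_injective (by simpa using h))
  have hfdeg : f.natDegree = 1 := by
    rw [hf, Polynomial.natDegree_map_eq_of_injective Int.cast_injective, hP1]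
  have hsplit : f.Splits := IsAlgClosed.splits f
  have hcard : f.roots.card = 1 :=
    (Polynomial.splits_iff_card_roots.mp hsplit).trans hfdeg
  have heval : ∀ γ : ℂ, Polynomial.eval γ f = Polynomial.aeval γ P := by
    intro γ; rw [hf, Polynomial.eval_map, Polynomial.aeval_def]; rfl
  have hαroot : (α : ℂ) ∈ f.roots := by
    rw [Polynomial.mem_roots']
    refine ⟨hf0, ?_⟩
    show Polynomial.eval (α:ℂ) f = 0
    rw [heval, aeval_complex_of_real, hroot]
    simp
  obtain ⟨s, hs⟩ := Multiset.exists_cons_of_mem hαroot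
  have hscard : s.card = 0 := by
    have h2 := hcard; rw [hs] at h2; simpa using h2
  have hroots : f.roots = {((α:ℝ):ℂ)} := by
    rw [hs, Multiset.card_eq_zero.mp hscard]; rfl
  set a0 := P.coeff 1 with ha0
  set b0 := P.coeff 0 with hb0
  set u := Q.coeff 2 with hu
  set v := Q.coeff 1 with hv
  set w := Q.coeff 0 with hw
  set A : ℂ := ((a0 : ℤ) : ℂ) with hAdef
  have hA : f.leadingCoeff = A := by
    rw [Polynomial.leadingCoeff, hfdeg, hf, Polynomial.coeff_map]; rfl
  have hfact : f = Polynomial.C A * (Polynomial.X - Polynomial.C (α:ℂ)) := by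
    calc f = Polynomial.C f.leadingCoeff * (f.roots.map fun a => Polynomial.X - Polynomial.C a).prod :=
          hsplit.eq_prod_roots
      _ = _ := by rw [hroots, hA]; simp
  have hexp : f = Polynomial.C A * Polynomial.X + Polynomial.C (-(A*(α:ℂ))) := by
    rw [hfact]
    simp only [Polynomial.C_neg, Polynomial.C_mul]
    ring
  have hcoeff : ∀ j, f.coeff j = ((P.coeff j : ℤ) : ℂ) := by
    intro j; rw [hf, Polynomial.coeff_map]; rfl
  have hb : ((b0 : ℤ) : ℂ) = -(A*(α:ℂ)) := by
    have h2 := congrArg (fun p => Polynomial.coeff p 0) hexp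
    simp only [hcoeff 0] at h2
    rw [hb0, h2]
    simp only [Polynomial.coeff_add, Polynomial.coeff_C_mul, Polynomial.coeff_X,
      Polynomial.coeff_C]
    norm_num
  set N : ℤ := u*b0^2 - v*a0*b0 + w*a0^2 with hN
  have hNC : (N : ℂ) = A^2 * Polynomial.aeval ((α:ℝ):ℂ) Q := by
    rw [aeval_complex_eq hQd, hN]
    push_cast
    rw [hb, hAdef]
    ring
  have hA0 : a0 ≠ 0 := by
    rw [ha0, ← hP1]
    exact Polynomial.leadingCoeff_ne_zero.mpr hP0
  have hAne : A ≠ 0 := by rw [hAdef]; exact_mod_cast hA0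
  have hqα := coprime_complex hPirr (by omega) hQ0 hndvd ((α:ℝ):ℂ)
    (by rw [aeval_complex_of_real, hroot]; simp)
  have hN0 : N ≠ 0 := by
    intro h0
    rw [h0] at hNC
    exact (mul_ne_zero (pow_ne_zero 2 hAne) hqα) (by simpa using hNC.symm)
  have hNge : (1:ℝ) ≤ ‖(N:ℂ)‖ := by
    rw [norm_intCast, ← Int.cast_abs]
    exact_mod_cast Int.one_le_abs hN0
  have hnorm : ‖(N:ℂ)‖ = ‖A‖^2 * ‖Polynomial.aeval ((α:ℝ):ℂ) Q‖ := by
    rw [hNC, norm_mul, norm_pow]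
  have hHP : ‖A‖ ≤ polyHeight P := by
    rw [hAdef, norm_intCast]
    exact abs_coeff_le_polyHeight P 1
  have hA0' : (0:ℝ) ≤ ‖A‖ := norm_nonneg _
  have hhQ : (1:ℝ) ≤ polyHeight Q := one_le_polyHeight hQ0
  have hhP : (0:ℝ) ≤ polyHeight P := polyHeight_nonneg P
  have hfinal : (1:ℝ) ≤ 81*(polyHeight Q)^2*(polyHeight P)^2*‖Polynomial.aeval ((α:ℝ):ℂ) Q‖ := by
    have hnn : (0:ℝ) ≤ ‖Polynomial.aeval ((α:ℝ):ℂ) Q‖ := norm_nonneg _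
    rw [hnorm] at hNge
    have e3 : ‖A‖^2 ≤ 81*(polyHeight Q)^2*(polyHeight P)^2 := by
      have s1 : ‖A‖^2 ≤ (polyHeight P)^2 := pow_le_pow_left₀ hA0' hHP 2
      have s2 : (1:ℝ) ≤ 81*(polyHeight Q)^2 := by nlinarith
      nlinarith [mul_le_mul_of_nonneg_right s2 (sq_nonneg (polyHeight P))]
    calc (1:ℝ) ≤ ‖A‖^2 * ‖Polynomial.aeval ((α:ℝ):ℂ) Q‖ := hNge
      _ ≤ (81*(polyHeight Q)^2*(polyHeight P)^2) * ‖Polynomial.aeval ((α:ℝ):ℂ) Q‖ :=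
          mul_le_mul_of_nonneg_right e3 hnn
      _ = 81*(polyHeight Q)^2*(polyHeight P)^2*‖Polynomial.aeval ((α:ℝ):ℂ) Q‖ := by ring
  have : ‖Polynomial.aeval ((α:ℝ):ℂ) Q‖ = |Polynomial.aeval α Q| := by
    rw [aeval_complex_of_real, Complex.norm_real, Real.norm_eq_abs]
  rw [this] at hfinal
  exact hfinal

lemma key_main {P Q : Polynomial ℤ} (hPirr : Irreducible P) (hdeg1 : 1 ≤ P.natDegree)
    (hdeg3 : P.natDegree ≤ 3) (hQd : Q.natDegree ≤ 2) (hQ0 : Q ≠ 0) (hndvd : ¬ P ∣ Q) {α : ℝ}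
    (hroot : Polynomial.aeval α P = 0) :
    1 ≤ 81 * polyHeight Q ^ 2 * polyHeight P ^ 2 * |Polynomial.aeval α Q| := by
  rcases (show P.natDegree = 1 ∨ P.natDegree = 2 ∨ P.natDegree = 3 by omega) with h|h|h
  · exact key_linear hPirr h hQd hQ0 hndvd hroot
  · exact key_quadratic hPirr h hQd hQ0 hndvd hroot
  · exact key_cubic hPirr h hQd hQ0 hndvd hroot




lemma natAbs_le_mul {a b : ℤ} (hb : b ≠ 0) : a.natAbs ≤ (a*b).natAbs := by
  rw [Int.natAbs_mul]
  exact Nat.le_mul_of_pos_right _ (Int.natAbs_pos.mpr hb)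

lemma polyHeight_dvd_le {P Q : Polynomial ℤ} (hP1 : 1 ≤ P.natDegree)
    (hQd : Q.natDegree ≤ 2) (hQ0 : Q ≠ 0) (hdvd : P ∣ Q) :
    polyHeight P ≤ polyHeight Q := by
  obtain ⟨L, hL⟩ := hdvd
  have hP0 : P ≠ 0 := by rintro rfl; simp at hL; exact hQ0 hL
  have hL0 : L ≠ 0 := by rintro rfl; simp at hL; exact hQ0 hL
  have hdeg : P.natDegree + L.natDegree = Q.natDegree := by
    rw [hL, Polynomial.natDegree_mul hP0 hL0]
  have hLdeg : L.natDegree ≤ 1 := by omega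
  rcases Nat.eq_or_lt_of_le hLdeg with hL1 | hL1'
  · -- L has degree exactly 1, so P has degree 1
    have hPdeg : P.natDegree = 1 := by omega
    set p1 := P.coeff 1 with hp1
    set p0 := P.coeff 0 with hp0
    set l1 := L.coeff 1 with hl1
    set l0 := L.coeff 0 with hl0
    have hp1ne : p1 ≠ 0 := by
      rw [hp1, ← hPdeg]; exact Polynomial.leadingCoeff_ne_zero.mpr hP0
    have hl1ne : l1 ≠ 0 := by
      rw [hl1, ← hL1]; exact Polynomial.leadingCoeff_ne_zero.mpr hL0
    have hPeq : P = Polynomial.C p1 * Polynomial.X + Polynomial.C p0 :=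
      Polynomial.eq_X_add_C_of_natDegree_le_one (by omega)
    have hLeq : L = Polynomial.C l1 * Polynomial.X + Polynomial.C l0 :=
      Polynomial.eq_X_add_C_of_natDegree_le_one (by omega)
    have hQeq : Q = Polynomial.C (p1*l1) * Polynomial.X^2
        + Polynomial.C (p1*l0 + p0*l1) * Polynomial.X + Polynomial.C (p0*l0) := by
      rw [hL, hPeq, hLeq]
      simp only [Polynomial.C_mul, Polynomial.C_add]
      ring
    have hq2 : Q.coeff 2 = p1*l1 := by
      rw [hQeq]
      simp only [Polynomial.coeff_add, Polynomial.coeff_C_mul, Polynomial.coeff_X_pow,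
        Polynomial.coeff_X, Polynomial.coeff_C]
      norm_num
    have hq1 : Q.coeff 1 = p1*l0 + p0*l1 := by
      rw [hQeq]
      simp only [Polynomial.coeff_add, Polynomial.coeff_C_mul, Polynomial.coeff_X_pow,
        Polynomial.coeff_X, Polynomial.coeff_C]
      norm_num
    have hq0 : Q.coeff 0 = p0*l0 := by
      rw [hQeq]
      simp only [Polynomial.coeff_add, Polynomial.coeff_C_mul, Polynomial.coeff_X_pow,
        Polynomial.coeff_X, Polynomial.coeff_C]
      norm_num
    apply polyHeight_le_of_natAbs_le
    intro i
    match i with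
    | 0 =>
      right
      rcases eq_or_ne l0 0 with h0 | h0
      · exact ⟨1, by rw [hq1, h0]; simpa using natAbs_le_mul hl1ne⟩
      · exact ⟨0, by rw [hq0]; exact natAbs_le_mul h0⟩
    | 1 => exact Or.inr ⟨2, by rw [hq2]; exact natAbs_le_mul hl1ne⟩
    | (n+2) =>
      left
      have : P.coeff (n+2) = 0 := Polynomial.coeff_eq_zero_of_natDegree_lt (by omega)
      simp [this]
  · -- L is a nonzero constant
    have hLdeg0 : L.natDegree = 0 := by omega
    have hLC : L = Polynomial.C (L.coeff 0) := Polynomial.eq_C_of_natDegree_eq_zero hLdeg0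
    have hl0 : L.coeff 0 ≠ 0 := by
      intro h; apply hL0; rw [hLC, h]; simp
    apply polyHeight_le_of_natAbs_le
    intro i
    left
    have : Q.coeff i = P.coeff i * L.coeff 0 := by
      conv_lhs => rw [hL, hLC]
      exact Polynomial.coeff_mul_C _ _ _
    rw [this]
    exact natAbs_le_mul hl0


lemma rpow_base_antitone {r h c : ℝ} (hr : 0 < r) (hrh : r ≤ h) (hc : c ≤ 0) :
    h ^ c ≤ r ^ c := by
  have hh : 0 < h := lt_of_lt_of_le hr hrh
  rw [show c = -(-c) by ring, Real.rpow_neg hh.le, Real.rpow_neg hr.le]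
  exact inv_anti₀ (Real.rpow_pos_of_pos hr _)
    (Real.rpow_le_rpow hr.le hrh (by linarith))


end Aux12

open Aux12 in
set_option maxHeartbeats 2000000 in
theorem stmt12 (ξ : ℝ) (hξ : Transcendental ℚ ξ)
    (hext1 : whExp 2 ξ = (((3 + Real.sqrt 5) / 2 : ℝ) : EReal))
    (hext2 : wExp 2 ξ = ((2 + Real.sqrt 5 : ℝ) : EReal)) :
    whStarExp 3 ξ ≤ ((3 * (2 + Real.sqrt 5) / (1 + Real.sqrt 5) : ℝ) : EReal) := by
  classical
  have sqrt5_lt : Real.sqrt 5 < 2.24 := by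
    rw [show (5:ℝ) = 5 from rfl]
    have := (Real.sqrt_lt' (by norm_num : (0:ℝ) < 2.24)).mpr (by norm_num : (5:ℝ) < 2.24 ^ 2)
    exact this
  have sqrt5_gt : (2.21:ℝ) < Real.sqrt 5 :=
    (Real.lt_sqrt (by norm_num)).mpr (by norm_num)
  have h1p : (0:ℝ) < 1 + Real.sqrt 5 := by positivity
  have hT39 : (39/10 : ℝ) ≤ 3 * (2 + Real.sqrt 5) / (1 + Real.sqrt 5) := by
    rw [le_div_iff₀ h1p]
    nlinarith
  rw [whStarExp]
  apply sSup_le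
  rintro x ⟨w, rfl, hev⟩
  rw [EReal.coe_le_coe_iff]
  by_contra hcon
  push_neg at hcon
  have hw39 : (39/10:ℝ) < w := lt_of_le_of_lt hT39 hcon
  -- Step A: infinitely many good quadratic polynomials
  have hvlt : (((421/100:ℝ)) : EReal) < wExp 2 ξ := by
    rw [hext2]
    exact EReal.coe_lt_coe_iff.mpr (by nlinarith)
  rw [wExp] at hvlt
  obtain ⟨x0, hx0S, hx0⟩ := lt_sSup_iff.mp hvlt
  obtain ⟨w₀, rfl, hw₀inf⟩ := hx0S
  have hw₀ : (421/100:ℝ) < w₀ := EReal.coe_lt_coe_iff.mp hx0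
  have hGoodInf : {Q : Polynomial ℤ | Q.natDegree ≤ 2 ∧ 0 < |Polynomial.aeval ξ Q| ∧
      |Polynomial.aeval ξ Q| ≤ polyHeight Q ^ (-(421/100:ℝ))}.Infinite := by
    apply hw₀inf.mono
    rintro Q ⟨h1, h2, h3⟩
    refine ⟨h1, h2, h3.trans ?_⟩
    have hQ0 : Q ≠ 0 := by rintro rfl; simp at h2
    exact Real.rpow_le_rpow_of_exponent_le (one_le_polyHeight hQ0) (by linarith)
  -- Step B: Liouville-type lower bound for quadratics
  have hFfin : {R : Polynomial ℤ | R.natDegree ≤ 2 ∧ 0 < |Polynomial.aeval ξ R| ∧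
      |Polynomial.aeval ξ R| ≤ polyHeight R ^ (-(106/25:ℝ))}.Finite := by
    by_contra hInf
    have hmem : (((106/25:ℝ)) : EReal) ∈ {x : EReal | ∃ w : ℝ, x = (w : EReal) ∧
        {P : Polynomial ℤ | P.natDegree ≤ 2 ∧ 0 < |Polynomial.aeval ξ P| ∧
          |Polynomial.aeval ξ P| ≤ (polyHeight P) ^ (-w)}.Infinite} := ⟨106/25, rfl, hInf⟩
    have hle : (((106/25:ℝ)) : EReal) ≤ wExp 2 ξ := by
      rw [wExp]; exact le_sSup hmem
    rw [hext2] at hle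
    have := EReal.coe_le_coe_iff.mp hle
    nlinarith
  obtain ⟨b, hb⟩ : BddAbove (polyHeight '' {R : Polynomial ℤ | R.natDegree ≤ 2 ∧
      0 < |Polynomial.aeval ξ R| ∧ |Polynomial.aeval ξ R| ≤ polyHeight R ^ (-(106/25:ℝ))}) :=
    (hFfin.image polyHeight).bddAbove
  set h₁ : ℝ := max b 1 with hh₁def
  have hLiou : ∀ R : Polynomial ℤ, R ≠ 0 → R.natDegree ≤ 2 → h₁ < polyHeight R →
      polyHeight R ^ (-(106/25:ℝ)) < |Polynomial.aeval ξ R| := by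
    intro R hR0 hRd hRht
    by_contra hle
    push_neg at hle
    have h2 : 0 < |Polynomial.aeval ξ R| :=
      abs_pos.mpr (aeval_ne_zero_of_transcendental hξ hR0)
    have hmem : R ∈ {R : Polynomial ℤ | R.natDegree ≤ 2 ∧ 0 < |Polynomial.aeval ξ R| ∧
        |Polynomial.aeval ξ R| ≤ polyHeight R ^ (-(106/25:ℝ))} := ⟨hRd, h2, hle⟩
    have := hb (Set.mem_image_of_mem polyHeight hmem)
    have : polyHeight R ≤ h₁ := le_trans this (le_max_left _ _)
    linarith
  -- Step C: a positive lower bound for small-height quadratics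
  obtain ⟨δ, hδ0, hδle⟩ : ∃ δ : ℝ, 0 < δ ∧ ∀ R : Polynomial ℤ, R ≠ 0 → R.natDegree ≤ 2 →
      polyHeight R ≤ h₁ → δ ≤ |Polynomial.aeval ξ R| := by
    set Gf := ((finite_polys 2 h₁).toFinset.filter (fun R => R ≠ 0)) with hGf
    rcases Finset.eq_empty_or_nonempty Gf with hemp | hne
    · refine ⟨1, one_pos, fun R hR0 hRd hRht => absurd ?_ (Finset.notMem_empty R)⟩
      rw [← hemp, hGf]
      simp only [Finset.mem_filter, Set.Finite.mem_toFinset]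
      exact ⟨⟨hRd, hRht⟩, hR0⟩
    · refine ⟨Gf.inf' hne (fun R => |Polynomial.aeval ξ R|), ?_, ?_⟩
      · rw [Finset.lt_inf'_iff]
        intro R hR
        have hR0 : R ≠ 0 := by
          rw [hGf] at hR
          exact (Finset.mem_filter.mp hR).2
        exact abs_pos.mpr (aeval_ne_zero_of_transcendental hξ hR0)
      · intro R hR0 hRd hRht
        apply Finset.inf'_le
        rw [hGf]
        simp only [Finset.mem_filter, Set.Finite.mem_toFinset]
        exact ⟨⟨hRd, hRht⟩, hR0⟩
  -- Step D: extract the eventual approximation property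
  rw [Filter.eventually_atTop] at hev
  obtain ⟨X₀, hX₀⟩ := hev
  -- constants
  set K : ℝ := |ξ| + 1 with hKdef
  have hK1 : (1:ℝ) ≤ K := by rw [hKdef]; linarith [abs_nonneg ξ]
  set C₃ : ℝ := 6 * K^2 with hC₃def
  have hC₃pos : 0 < C₃ := by rw [hC₃def]; positivity
  set C₂ : ℝ := 81 * C₃ with hC₂def
  have hC₂pos : 0 < C₂ := by rw [hC₂def]; positivity
  set M : ℝ := 162 + 4*C₂ + 2*C₃ + 2*C₃/δ + 2 with hMdef
  have hMpos : (0:ℝ) < M := by rw [hMdef]; positivity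
  have hM162 : 162 ≤ M := by
    have t1 : (0:ℝ) ≤ 4*C₂ := by positivity
    have t2 : (0:ℝ) ≤ 2*C₃ := by positivity
    have t3 : (0:ℝ) ≤ 2*C₃/δ := by positivity
    rw [hMdef]; linarith
  have hM1 : (1:ℝ) ≤ M := by linarith
  clear_value M
  -- choose a good quadratic of large height
  obtain ⟨Q, hQmem, hQht⟩ := exists_height_gt hGoodInf (fun P hP => hP.1)
    (max (max (M^(100:ℕ)) X₀) 1)
  obtain ⟨hQd, hQpos, hQval⟩ := hQmem
  have hQ0 : Q ≠ 0 := by rintro rfl; simp at hQpos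
  set h : ℝ := polyHeight Q with hhdef
  have hhB : M^(100:ℕ) < h := lt_of_le_of_lt (le_trans (le_max_left _ _) (le_max_left _ _)) hQht
  have hhX₀ : X₀ < h := lt_of_le_of_lt (le_trans (le_max_right _ _) (le_max_left _ _)) hQht
  have hh1 : (1:ℝ) < h := lt_of_le_of_lt (le_max_right _ _) hQht
  have hh0 : (0:ℝ) < h := lt_trans one_pos hh1
  set X : ℝ := h ^ ((11/10:ℝ)) with hXdef
  have hX0 : (0:ℝ) < X := Real.rpow_pos_of_pos hh0 _
  have hhX : h ≤ X := by
    calc h = h ^ ((1:ℝ)) := (Real.rpow_one h).symm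
      _ ≤ X := by
          rw [hXdef]
          exact Real.rpow_le_rpow_of_exponent_le hh1.le (by norm_num)
  have hX1 : (1:ℝ) ≤ X := by linarith
  obtain ⟨α, R, hRirr, hRroot, hRd3, hRht, hαpos, hαapp⟩ := hX₀ X (by linarith)
  have hR0 : R ≠ 0 := hRirr.ne_zero
  set r : ℝ := polyHeight R with hrdef
  have hr1 : (1:ℝ) ≤ r := one_le_polyHeight hR0
  have hr0 : (0:ℝ) < r := by linarith
  have hrX : r ≤ X := hRht
  have hw0 : (0:ℝ) < w := by linarith
  have hXw1 : X ^ (-w) ≤ 1 := Real.rpow_le_one_of_one_le_of_nonpos hX1 (by linarith)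
  have hXwpos : (0:ℝ) < X ^ (-w) := Real.rpow_pos_of_pos hX0 _
  have hdist : |ξ - α| ≤ r⁻¹ * X ^ (-w) := hαapp
  have hdist1 : |ξ - α| ≤ 1 := by
    have hrinv : r⁻¹ ≤ 1 := by
      rw [inv_le_one_iff₀]; right; exact hr1
    calc |ξ - α| ≤ r⁻¹ * X ^ (-w) := hdist
      _ ≤ 1 * 1 := mul_le_mul hrinv hXw1 hXwpos.le (by linarith)
      _ = 1 := by norm_num
  have hRdeg1 : 1 ≤ R.natDegree := by
    by_contra hd0
    push_neg at hd0
    have hd0' : R.natDegree = 0 := by omega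
    have hRC : R = Polynomial.C (R.coeff 0) := Polynomial.eq_C_of_natDegree_eq_zero hd0'
    rw [hRC] at hRroot
    simp only [Polynomial.aeval_C] at hRroot
    have : R.coeff 0 = 0 := by
      have h' : ((R.coeff 0 : ℤ) : ℝ) = 0 := by simpa using hRroot
      exact_mod_cast h'
    apply hR0
    rw [hRC, this]
    simp
  -- |R(ξ)| ≤ C₃ * X^(-w)
  have hRξ : |Polynomial.aeval ξ R| ≤ C₃ * X ^ (-w) := by
    have hsub := abs_aeval_sub_le hRd3 (ξ := ξ) (α := α) hdist1
    rw [hRroot, sub_zero] at hsub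
    calc |Polynomial.aeval ξ R| ≤ 6 * (|ξ|+1)^2 * polyHeight R * |ξ - α| := hsub
      _ ≤ 6 * (|ξ|+1)^2 * r * (r⁻¹ * X ^ (-w)) := by
          apply mul_le_mul_of_nonneg_left hdist
          rw [hKdef] at *
          positivity
      _ = C₃ * (r * r⁻¹) * X ^ (-w) := by rw [hC₃def, hKdef]; ring
      _ = C₃ * X ^ (-w) := by rw [mul_inv_cancel₀ (by linarith : r ≠ 0)]; ring
  -- basic rpow facts
  have L_mul : ∀ a c : ℝ, h ^ a * h ^ c = h ^ (a+c) := fun a c => (Real.rpow_add hh0 a c).symm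
  have L_mono : ∀ a c : ℝ, a ≤ c → h ^ a ≤ h ^ c :=
    fun a c hac => Real.rpow_le_rpow_of_exponent_le hh1.le hac
  have hXpow : ∀ c : ℝ, X ^ c = h ^ ((11/10)*c) := by
    intro c
    rw [hXdef, ← Real.rpow_mul hh0.le]
  have hMkey : M ≤ h ^ ((1/100:ℝ)) := by
    have h1 : ((M^(100:ℕ) : ℝ)) ^ ((1/100:ℝ)) ≤ h ^ ((1/100:ℝ)) :=
      Real.rpow_le_rpow (by positivity) hhB.le (by norm_num)
    rw [← Real.rpow_natCast M 100, ← Real.rpow_mul hMpos.le] at h1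
    norm_num at h1
    exact h1
  have hfrac : h ^ (-(1/100:ℝ)) ≤ M⁻¹ := by
    rw [Real.rpow_neg hh0.le]
    exact inv_anti₀ hMpos hMkey
  have hMfrac : ∀ c : ℝ, c ≤ -(1/100) → h ^ c ≤ M⁻¹ := by
    intro c hc
    exact (L_mono c (-(1/100)) hc).trans hfrac
  have hM4C₂ : 4*C₂ ≤ M := by
    have t2 : (0:ℝ) ≤ 2*C₃ := by positivity
    have t3 : (0:ℝ) ≤ 2*C₃/δ := by positivity
    rw [hMdef]; linarith
  have hM2C₃ : 2*C₃ ≤ M := by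
    have t1 : (0:ℝ) ≤ 4*C₂ := by positivity
    have t3 : (0:ℝ) ≤ 2*C₃/δ := by positivity
    rw [hMdef]; linarith
  have hM2C₃δ : 2*C₃/δ ≤ M := by
    have t1 : (0:ℝ) ≤ 4*C₂ := by positivity
    have t2 : (0:ℝ) ≤ 2*C₃ := by positivity
    rw [hMdef]; linarith
  by_cases hdvd : R ∣ Q
  · -- R divides Q : R is a small quadratic factor
    have hRd2 : R.natDegree ≤ 2 := (Polynomial.natDegree_le_of_dvd hdvd hQ0).trans hQd
    have hrh : r ≤ h := polyHeight_dvd_le hRdeg1 hQd hQ0 hdvd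
    have hXw_eq : X ^ (-w) = h ^ ((11/10)*(-w)) := hXpow (-w)
    rcases le_or_gt r h₁ with hcase | hcase
    · -- small height : contradiction with δ
      have hδR : δ ≤ |Polynomial.aeval ξ R| := hδle R hR0 hRd2 hcase
      have hbound : δ ≤ C₃ * h ^ ((11/10)*(-w)) := by
        rw [← hXw_eq]; linarith [hRξ]
      have hhw : h ^ ((11/10)*(-w)) ≤ M⁻¹ := hMfrac _ (by linarith)
      have hfin : δ ≤ C₃ * M⁻¹ :=
        hbound.trans (mul_le_mul_of_nonneg_left hhw hC₃pos.le)
      have hinv : M⁻¹ ≤ (2*C₃/δ)⁻¹ := inv_anti₀ (by positivity) hM2C₃δ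
      have heq : C₃ * (2*C₃/δ)⁻¹ = δ/2 := by
        field_simp
      have : C₃ * M⁻¹ ≤ δ/2 := by
        calc C₃ * M⁻¹ ≤ C₃ * (2*C₃/δ)⁻¹ := mul_le_mul_of_nonneg_left hinv hC₃pos.le
          _ = δ/2 := heq
      linarith
    · -- large height : Liouville bound
      have hLiouR := hLiou R hR0 hRd2 hcase
      have hmono : h ^ (-(106/25:ℝ)) ≤ r ^ (-(106/25:ℝ)) :=
        rpow_base_antitone hr0 hrh (by norm_num)
      have hchain : h ^ (-(106/25:ℝ)) < C₃ * h ^ ((11/10)*(-w)) := by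
        rw [← hXw_eq]
        calc h ^ (-(106/25:ℝ)) ≤ r ^ (-(106/25:ℝ)) := hmono
          _ < |Polynomial.aeval ξ R| := hLiouR
          _ ≤ C₃ * X ^ (-w) := hRξ
      have hpos25 : (0:ℝ) < h ^ ((106/25:ℝ)) := Real.rpow_pos_of_pos hh0 _
      have h1lt : 1 < C₃ * h ^ ((11/10)*(-w) + 106/25) := by
        have hmul := mul_lt_mul_of_pos_right hchain hpos25
        have e1 : h ^ (-(106/25:ℝ)) * h ^ ((106/25:ℝ)) = 1 := by
          rw [L_mul]; norm_num
        have e2 : C₃ * h ^ ((11/10)*(-w)) * h ^ ((106/25:ℝ))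
            = C₃ * h ^ ((11/10)*(-w) + 106/25) := by
          rw [mul_assoc, L_mul]
        rw [e1, e2] at hmul
        exact hmul
      have hsmall : h ^ ((11/10)*(-w) + 106/25) ≤ M⁻¹ := hMfrac _ (by linarith)
      have hinv : M⁻¹ ≤ (2*C₃)⁻¹ := inv_anti₀ (by positivity) hM2C₃
      have : C₃ * h ^ ((11/10)*(-w) + 106/25) ≤ 1/2 := by
        calc C₃ * h ^ ((11/10)*(-w) + 106/25) ≤ C₃ * M⁻¹ :=
              mul_le_mul_of_nonneg_left hsmall hC₃pos.le
          _ ≤ C₃ * (2*C₃)⁻¹ := mul_le_mul_of_nonneg_left hinv hC₃pos.le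
          _ = 1/2 := by
              field_simp
              all_goals ring
      linarith
  · -- main branch : resultant estimate
    have hkey := key_main hRirr hRdeg1 hRd3 hQd hQ0 hdvd hRroot
    rw [← hhdef, ← hrdef] at hkey
    have hQα : |Polynomial.aeval α Q| ≤ h ^ (-(421/100:ℝ)) + C₃ * h * (r⁻¹ * X ^ (-w)) := by
      have hsub := abs_aeval_sub_le (Q := Q) (le_trans hQd (by norm_num)) (ξ := ξ) (α := α) hdist1
      rw [← hhdef, ← hKdef, ← hC₃def] at hsub
      have htri : |Polynomial.aeval α Q| ≤ |Polynomial.aeval ξ Q|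
          + |Polynomial.aeval ξ Q - Polynomial.aeval α Q| := by
        have habs := abs_add_le (Polynomial.aeval α Q - Polynomial.aeval ξ Q) (Polynomial.aeval ξ Q)
        simp only [sub_add_cancel] at habs
        have hcomm : |Polynomial.aeval α Q - Polynomial.aeval ξ Q|
            = |Polynomial.aeval ξ Q - Polynomial.aeval α Q| := abs_sub_comm _ _
        linarith
      have hd2 : C₃ * h * |ξ - α| ≤ C₃ * h * (r⁻¹ * X ^ (-w)) := by
        apply mul_le_mul_of_nonneg_left hdist (by positivity)
      calc |Polynomial.aeval α Q| ≤ |Polynomial.aeval ξ Q|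
            + |Polynomial.aeval ξ Q - Polynomial.aeval α Q| := htri
        _ ≤ h ^ (-(421/100:ℝ)) + C₃ * h * |ξ - α| := by linarith [hQval, hsub]
        _ ≤ h ^ (-(421/100:ℝ)) + C₃ * h * (r⁻¹ * X ^ (-w)) := by linarith
    have hstep : (1:ℝ) ≤ 81*h^2*r^2*(h ^ (-(421/100:ℝ)))
        + 81*C₃*((h^2*h)*((r^2*r⁻¹) * X ^ (-w))) := by
      calc (1:ℝ) ≤ 81 * h ^ 2 * r ^ 2 * |Polynomial.aeval α Q| := hkey
        _ ≤ 81 * h ^ 2 * r ^ 2 * (h ^ (-(421/100:ℝ)) + C₃ * h * (r⁻¹ * X ^ (-w))) := by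
            apply mul_le_mul_of_nonneg_left hQα
            have := polyHeight_nonneg Q
            have := polyHeight_nonneg R
            positivity
        _ = 81*h^2*r^2*(h ^ (-(421/100:ℝ))) + 81*C₃*((h^2*h)*((r^2*r⁻¹) * X ^ (-w))) := by
            ring
    have hr2r : r^2*r⁻¹ = r := by
      rw [sq, mul_assoc, mul_inv_cancel₀ (by linarith : r ≠ 0), mul_one]
    rw [hr2r] at hstep
    -- term 1
    have hh2 : (h:ℝ)^2 = h ^ ((2:ℝ)) := by
      rw [← Real.rpow_natCast h 2]; norm_num
    have hX2 : X^2 = h ^ ((11/5:ℝ)) := by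
      rw [← Real.rpow_natCast X 2, hXpow]; norm_num
    have hr2X : r^2 ≤ X^2 := pow_le_pow_left₀ hr0.le hrX 2
    have ht1 : 81*h^2*r^2*(h ^ (-(421/100:ℝ))) ≤ 1/2 := by
      have s1 : 81*h^2*r^2*(h ^ (-(421/100:ℝ))) ≤ 81*h^2*X^2*(h ^ (-(421/100:ℝ))) := by
        have hnn : (0:ℝ) ≤ 81*h^2 := by positivity
        have hnn2 : (0:ℝ) ≤ h ^ (-(421/100:ℝ)) := (Real.rpow_pos_of_pos hh0 _).le
        exact mul_le_mul_of_nonneg_right (mul_le_mul_of_nonneg_left hr2X hnn) hnn2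
      have s2 : 81*h^2*X^2*(h ^ (-(421/100:ℝ))) = 81 * h ^ (-(1/100:ℝ)) := by
        rw [hh2, hX2]
        rw [show (81:ℝ) * h ^ ((2:ℝ)) * h ^ ((11/5:ℝ)) * h ^ (-(421/100:ℝ))
          = 81 * (h ^ ((2:ℝ)) * h ^ ((11/5:ℝ)) * h ^ (-(421/100:ℝ))) by ring]
        rw [L_mul, L_mul]
        norm_num
      have s3 : h ^ (-(1/100:ℝ)) ≤ M⁻¹ := hfrac
      have s4 : M⁻¹ ≤ (162:ℝ)⁻¹ := inv_anti₀ (by norm_num) hM162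
      calc 81*h^2*r^2*(h ^ (-(421/100:ℝ))) ≤ 81*h^2*X^2*(h ^ (-(421/100:ℝ))) := s1
        _ = 81 * h ^ (-(1/100:ℝ)) := s2
        _ ≤ 81 * (162:ℝ)⁻¹ := by
            have h162 := s3.trans s4
            linarith
        _ = 1/2 := by norm_num
    -- term 2
    have hXX : X * X ^ (-w) = h ^ ((11/10)*(1-w)) := by
      have : X * X ^ (-w) = X ^ ((1:ℝ)) * X ^ (-w) := by rw [Real.rpow_one]
      rw [this, ← Real.rpow_add hX0, hXpow]
      congr 1
      all_goals ring
    have hh3 : (h:ℝ)^2*h = h ^ ((3:ℝ)) := by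
      rw [hh2, show (h ^ ((2:ℝ)) * h : ℝ) = h ^ ((2:ℝ)) * h ^ ((1:ℝ)) by rw [Real.rpow_one],
        L_mul]
      norm_num
    have ht2 : 81*C₃*((h^2*h)*(r * X ^ (-w))) ≤ 1/4 := by
      have s1 : r * X ^ (-w) ≤ X * X ^ (-w) :=
        mul_le_mul_of_nonneg_right hrX hXwpos.le
      have s2 : (h^2*h)*(r * X ^ (-w)) ≤ h ^ ((3:ℝ)) * h ^ ((11/10)*(1-w)) := by
        rw [← hh3, ← hXX]
        apply mul_le_mul_of_nonneg_left s1 (by positivity)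
      have s3 : h ^ ((3:ℝ)) * h ^ ((11/10)*(1-w)) = h ^ (3 + (11/10)*(1-w)) := L_mul _ _
      have s4 : h ^ (3 + (11/10)*(1-w)) ≤ M⁻¹ := hMfrac _ (by linarith)
      have s5 : M⁻¹ ≤ (4*C₂)⁻¹ := inv_anti₀ (by positivity) hM4C₂
      have s6 : (h^2*h)*(r * X ^ (-w)) ≤ (4*C₂)⁻¹ := by
        rw [s3] at s2
        linarith [s2.trans (s4.trans s5)]
      calc 81*C₃*((h^2*h)*(r * X ^ (-w))) ≤ 81*C₃*(4*C₂)⁻¹ := by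
            apply mul_le_mul_of_nonneg_left s6 (by positivity)
        _ = 1/4 := by
            rw [hC₂def]
            field_simp
    linarith
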